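/- Let k = 2p+1 with an integer p ≥ 1 (so k ≥ 3 is odd), and let A : (0,1) → ℝ be the drift coefficient defined in the context. Then there exists μ̃ ∈ (0,1) such that A(μ̃) = 0. -/

import Mathlib

open Finset in
/-- The auxiliary function `f(k,μ)` appearing in the drift coefficients of the
linearized LoRA search-phase dynamics for a pure Hermite activation `He_k`. -/
noncomputable def fAux (k : ℕ) (μ : ℝ) : ℝ :=
  ∑ m ∈ Finset.Icc 1 (k / 2),
    (1 + (k : ℝ) * (μ ^ 2 - 1) / (2 * (m : ℝ))) * μ ^ (2 * (k - 2 * m)) *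
      (μ ^ 2 - 1) ^ (2 * m - 1) /
      (((k - 2 * m).factorial : ℝ) * (m.factorial : ℝ) * ((m - 1).factorial : ℝ) *
        (2 : ℝ) ^ (2 * m - 1))

/-- The rescaled drift coefficient `A(μ)` of the linearized dynamics. -/
noncomputable def Acoef (k : ℕ) (μ : ℝ) : ℝ :=
  -(μ ^ (k - 1) * (μ ^ k - 1) + ((k.factorial : ℝ) / (k : ℝ)) * μ⁻¹ * fAux k μ)

/-- The rescaled drift coefficient `B(μ)` of the linearized dynamics. -/
noncomputable def Bcoef (k : ℕ) (μ : ℝ) : ℝ :=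
  -(μ ^ (2 * k - 2) + ((k.factorial : ℝ) / (k : ℝ)) * (μ ^ 2)⁻¹ * fAux k μ)

/-- The characteristic escape-time prefactor `τ(μ)`. -/
noncomputable def tauCoef (k : ℕ) (μ : ℝ) : ℝ :=
  (-(Bcoef k μ) + Real.sqrt ((Bcoef k μ) ^ 2 + 4 * (Acoef k μ) ^ 2)) /
    (2 * (Acoef k μ) ^ 2)

noncomputable def fAux2 (k : ℕ) (μ : ℝ) : ℝ :=
  ∑ m ∈ Finset.Icc 1 (k / 2),
    (1 + (k : ℝ) * (μ ^ 2 - 1) / (2 * (m : ℝ))) * μ ^ (2 * (k - 2 * m) - 2) *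
      (μ ^ 2 - 1) ^ (2 * m - 1) /
      (((k - 2 * m).factorial : ℝ) * (m.factorial : ℝ) * ((m - 1).factorial : ℝ) *
        (2 : ℝ) ^ (2 * m - 1))

noncomputable def Gfun (k : ℕ) (μ : ℝ) : ℝ :=
  μ ^ (k - 2) * (μ ^ k - 1) + ((k.factorial : ℝ) / (k : ℝ)) * fAux2 k μ

lemma fAux_eq (p : ℕ) (hp : 1 ≤ p) (μ : ℝ) :
    fAux (2*p+1) μ = μ ^ 2 * fAux2 (2*p+1) μ := by
  unfold fAux fAux2
  rw [Finset.mul_sum]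
  refine Finset.sum_congr rfl fun m hm => ?_
  rw [Finset.mem_Icc] at hm
  obtain ⟨hm1, hm2⟩ := hm
  have h2 : μ ^ (2 * ((2*p+1) - 2*m)) = μ^2 * μ^(2 * ((2*p+1) - 2*m) - 2) := by
    rw [← pow_add]; congr 1; omega
  rw [h2]
  ring

lemma Acoef_eq (p : ℕ) (hp : 1 ≤ p) (μ : ℝ) :
    Acoef (2*p+1) μ = -(μ * Gfun (2*p+1) μ) := by
  by_cases hμ : μ = 0
  · subst hμ
    have h1 : 2*p+1-1 ≠ 0 := by omega
    simp [Acoef, fAux_eq p hp, zero_pow h1]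
    omega
  · rw [Acoef, fAux_eq p hp, Gfun]
    have e1 : (2*p+1) - 1 = 1 + ((2*p+1) - 2) := by omega
    rw [e1, pow_add]
    field_simp

lemma Gfun_cont (k : ℕ) : Continuous (Gfun k) := by
  unfold Gfun
  apply Continuous.add
  · fun_prop
  · apply Continuous.mul continuous_const
    apply continuous_finset_sum
    intro m _
    apply Continuous.div_const
    fun_prop

lemma Gfun_zero_pos (p : ℕ) (hp : 1 ≤ p) : 0 < Gfun (2*p+1) 0 := by
  have h0 : (0:ℝ)^(2*p+1-2) = 0 := zero_pow (by omega)
  unfold Gfun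
  rw [h0, zero_mul, zero_add]
  apply mul_pos
  · apply div_pos
    · exact_mod_cast Nat.cast_pos.mpr (Nat.factorial_pos _)
    · positivity
  · unfold fAux2
    have hmem : p ∈ Finset.Icc 1 ((2*p+1)/2) := by rw [Finset.mem_Icc]; omega
    rw [Finset.sum_eq_single_of_mem p hmem (fun m hm hne => by
      rw [Finset.mem_Icc] at hm
      have h1 : 2 * ((2*p+1) - 2*m) - 2 ≠ 0 := by omega
      simp [zero_pow h1])]
    have e1 : 2 * ((2*p+1) - 2*p) - 2 = 0 := by omega
    have e2 : (2*p+1) - 2*p = 1 := by omega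
    rw [e1, e2, pow_zero]
    have hp0 : (0:ℝ) < p := by exact_mod_cast hp
    have ha : (1 : ℝ) + ((2*p+1:ℕ):ℝ) * ((0:ℝ)^2 - 1)/(2*(p:ℝ)) = -(1/(2*(p:ℝ))) := by
      push_cast
      field_simp
      ring
    have hb : ((0:ℝ)^2 - 1)^(2*p-1) = -1 := by
      have h : ((0:ℝ)^2 - 1) = -1 := by norm_num
      rw [h, Odd.neg_one_pow ⟨p-1, by omega⟩]
    rw [ha, hb]
    have hD : (0:ℝ) < ((Nat.factorial 1 : ℕ):ℝ) * ((p.factorial : ℕ):ℝ) *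
        (((p-1).factorial : ℕ):ℝ) * (2:ℝ)^(2*p-1) := by
      have f1 : (0:ℝ) < ((Nat.factorial 1 : ℕ):ℝ) := by exact_mod_cast Nat.factorial_pos 1
      have f2 : (0:ℝ) < ((p.factorial : ℕ):ℝ) := by exact_mod_cast Nat.factorial_pos p
      have f3 : (0:ℝ) < (((p-1).factorial : ℕ):ℝ) := by exact_mod_cast Nat.factorial_pos (p-1)
      have f4 : (0:ℝ) < (2:ℝ)^(2*p-1) := by positivity
      exact mul_pos (mul_pos (mul_pos f1 f2) f3) f4
    have : -(1/(2*(p:ℝ))) * 1 * (-1) /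
        (((Nat.factorial 1 : ℕ):ℝ) * ((p.factorial : ℕ):ℝ) * (((p-1).factorial : ℕ):ℝ) *
          (2:ℝ)^(2*p-1)) =
        (1/(2*(p:ℝ))) / (((Nat.factorial 1 : ℕ):ℝ) * ((p.factorial : ℕ):ℝ) *
          (((p-1).factorial : ℕ):ℝ) * (2:ℝ)^(2*p-1)) := by ring
    rw [this]
    exact div_pos (by positivity) hD

lemma exists_pos (p : ℕ) (hp : 1 ≤ p) :
    ∃ μ₁ : ℝ, 0 < μ₁ ∧ μ₁ < 1 ∧ 0 < Acoef (2*p+1) μ₁ := by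
  set k := 2*p+1 with hk
  have hk0 : (0:ℝ) < k := by positivity
  have hkinv : (0:ℝ) < 1 - 1/(k:ℝ) := by
    rw [sub_pos, div_lt_one hk0]
    exact_mod_cast by omega
  set μ := Real.sqrt (1 - 1/(k:ℝ)) with hμdef
  have hμ0 : 0 < μ := Real.sqrt_pos.mpr hkinv
  have hμsq : μ^2 = 1 - 1/(k:ℝ) := Real.sq_sqrt hkinv.le
  have hμ1 : μ < 1 := by nlinarith [hμsq, one_div_pos.mpr hk0]
  refine ⟨μ, hμ0, hμ1, ?_⟩
  rw [Acoef, neg_pos]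
  have hT1 : μ ^ (k - 1) * (μ ^ k - 1) < 0 := by
    apply mul_neg_of_pos_of_neg (pow_pos hμ0 _)
    rw [sub_neg]
    exact pow_lt_one₀ hμ0.le hμ1 (by omega)
  have hf : fAux k μ ≤ 0 := by
    apply Finset.sum_nonpos
    intro m hm
    rw [Finset.mem_Icc] at hm
    obtain ⟨hm1, hm2⟩ := hm
    have hmR : (1:ℝ) ≤ m := by exact_mod_cast hm1
    have h2m : (0:ℝ) < 2*(m:ℝ) := by linarith
    have ha : 0 ≤ 1 + (k:ℝ) * (μ^2 - 1) / (2*(m:ℝ)) := by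
      rw [hμsq]
      have key : (k:ℝ) * ((1 - 1/(k:ℝ)) - 1) = -1 := by field_simp; ring
      rw [key]
      have : (-1:ℝ)/(2*(m:ℝ)) = -(1/(2*(m:ℝ))) := by ring
      rw [this]
      have h1 : 1/(2*(m:ℝ)) ≤ 1 := by
        rw [div_le_one h2m]; linarith
      linarith
    have hb : (0:ℝ) ≤ μ ^ (2*(k-2*m)) := by positivity
    have hc : (μ^2 - 1)^(2*m-1) ≤ 0 := by
      apply Odd.pow_nonpos ⟨m-1, by omega⟩
      rw [hμsq]
      have : (0:ℝ) < 1/(k:ℝ) := one_div_pos.mpr hk0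
      linarith
    have hnum : (1 + (k:ℝ) * (μ^2 - 1) / (2*(m:ℝ))) * μ ^ (2*(k-2*m)) *
        (μ^2 - 1)^(2*m-1) ≤ 0 :=
      mul_nonpos_of_nonneg_of_nonpos (mul_nonneg ha hb) hc
    have hden : (0:ℝ) ≤ (((k - 2*m).factorial : ℕ):ℝ) * ((m.factorial : ℕ):ℝ) *
        (((m-1).factorial : ℕ):ℝ) * (2:ℝ)^(2*m-1) := by positivity
    exact div_nonpos_of_nonpos_of_nonneg hnum hden
  have hT2 : ((k.factorial : ℕ):ℝ)/(k:ℝ) * μ⁻¹ * fAux k μ ≤ 0 := by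
    apply mul_nonpos_of_nonneg_of_nonpos _ hf
    positivity
  linarith


/-- For an odd pure Hermite activation of degree `k = 2p+1 ≥ 3`, there exists a
pre-training alignment `μ̃ ∈ (0,1)` at which the drift coefficient `A`
vanishes, so that escape from the correlated search phase fails. -/
theorem stmt2 (p : ℕ) (hp : 1 ≤ p) :
    ∃ μ ∈ Set.Ioo (0 : ℝ) 1, Acoef (2 * p + 1) μ = 0 := by
  obtain ⟨μ₁, hμ₁0, hμ₁1, hA1⟩ := exists_pos p hp
  have hGc := Gfun_cont (2*p+1)
  have hG0 := Gfun_zero_pos p hp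
  have hopen : IsOpen {x : ℝ | 0 < Gfun (2*p+1) x} := isOpen_lt continuous_const hGc
  obtain ⟨ε, hε, hball⟩ := Metric.isOpen_iff.mp hopen 0 hG0
  set μ₀ := min (ε/2) (μ₁/2) with hμ₀def
  have hμ₀0 : 0 < μ₀ := lt_min (by linarith) (by linarith)
  have hμ₀ε : μ₀ < ε := lt_of_le_of_lt (min_le_left _ _) (by linarith)
  have hμ₀1 : μ₀ < μ₁ := lt_of_le_of_lt (min_le_right _ _) (by linarith)
  have hGμ₀ : 0 < Gfun (2*p+1) μ₀ := by
    apply hball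
    rw [Metric.mem_ball, Real.dist_eq, sub_zero, abs_of_pos hμ₀0]
    exact hμ₀ε
  have hA0 : Acoef (2*p+1) μ₀ < 0 := by
    rw [Acoef_eq p hp]
    have := mul_pos hμ₀0 hGμ₀
    linarith
  have hAeq : (Acoef (2*p+1)) = fun μ => -(μ * Gfun (2*p+1) μ) := funext (Acoef_eq p hp)
  have hAc : ContinuousOn (Acoef (2*p+1)) (Set.Icc μ₀ μ₁) := by
    rw [hAeq]; exact ((continuous_id.mul hGc).neg).continuousOn
  have h0mem : (0:ℝ) ∈ Set.Icc (Acoef (2*p+1) μ₀) (Acoef (2*p+1) μ₁) := ⟨hA0.le, hA1.le⟩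
  obtain ⟨μ, hμmem, hμ0⟩ := intermediate_value_Icc hμ₀1.le hAc h0mem
  exact ⟨μ, ⟨lt_of_lt_of_le hμ₀0 hμmem.1, lt_of_le_of_lt hμmem.2 hμ₁1⟩, hμ0⟩
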